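/- Assume the MAR condition and the ε-positivity condition, and let π̂ : 𝒳 → ℝ and μ̂ : 𝒳 → ℝ be measurable nuisance estimates with 1 − π̂(X) ≥ ε′ almost surely for some ε′ > 0, such that all quantities below are integrable. Then the population bias of the doubly robust functional equals a second-order product term: E[ ((1−R)/(1−π̂(X)))·(S − μ̂(X)) + μ̂(X) ] − ψ = E[ (π̂(X) − π(X))·(μ0(X) − μ̂(X)) / (1 − π̂(X)) ]. -/

import Mathlib

open MeasureTheory ProbabilityTheory

/-- **The exact second-order bias computation `R₂(P̂, P)` in Step 1 of the proof of
Theorem 3.1.** Under MAR and ε-positivity, for measurable nuisance estimates `π̂, μ̂`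
with `1 − π̂(X) ≥ ε′ > 0` a.s., the population bias of the doubly robust functional is
`E[((1−R)/(1−π̂(X)))·(S − μ̂(X)) + μ̂(X)] − ψ
  = E[(π̂(X) − π(X))·(μ0(X) − μ̂(X)) / (1 − π̂(X))]`. -/
theorem dr_bias_second_order
    {Ω 𝒳 : Type*} [MeasurableSpace Ω] [MeasurableSpace 𝒳]
    (P : Measure Ω) [IsProbabilityMeasure P]
    (X : Ω → 𝒳) (hX : Measurable X)
    (R : Ω → ℝ) (hR : Measurable R) (hR01 : ∀ ω, R ω = 0 ∨ R ω = 1)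
    (S : Ω → ℝ) (hSmeas : Measurable S) (hSint : Integrable S P)
    -- the σ-algebra generated by X
    (mX : MeasurableSpace Ω) (hmX : mX = MeasurableSpace.comap X inferInstance)
    -- MAR condition: E[(1−R)·S | mX] = E[1−R | mX] · E[S | mX] a.s.
    (hMAR : P[fun ω => (1 - R ω) * S ω|mX]
      =ᵐ[P] fun ω => (P[fun ω' => 1 - R ω'|mX]) ω * (P[S|mX]) ω)
    -- ε-positivity condition: π(X) = E[R | mX] ≤ 1 − ε a.s.
    (ε : ℝ) (hε : 0 < ε)
    (hpos : ∀ᵐ ω ∂P, (P[R|mX]) ω ≤ 1 - ε)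
    -- abbreviations: π(X), μ0(X) and ψ
    (πX μ0X : Ω → ℝ) (ψ : ℝ)
    (hπX : πX = P[R|mX])
    (hμ0X : μ0X = fun ω => (P[fun ω' => (1 - R ω') * S ω'|mX]) ω / (1 - πX ω))
    (hψ : ψ = ∫ ω, S ω ∂P)
    -- nuisance estimates
    (πhat μhat : 𝒳 → ℝ) (hπhat : Measurable πhat) (hμhat : Measurable μhat)
    (ε' : ℝ) (hε' : 0 < ε')
    (hpos' : ∀ᵐ ω ∂P, ε' ≤ 1 - πhat (X ω))
    -- integrability of all quantities involved
    (hint1 : Integrable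
      (fun ω => (1 - R ω) / (1 - πhat (X ω)) * (S ω - μhat (X ω)) + μhat (X ω)) P)
    (hint2 : Integrable
      (fun ω => (πhat (X ω) - πX ω) * (μ0X ω - μhat (X ω)) / (1 - πhat (X ω))) P) :
    (∫ ω, ((1 - R ω) / (1 - πhat (X ω)) * (S ω - μhat (X ω)) + μhat (X ω)) ∂P) - ψ
      = ∫ ω, (πhat (X ω) - πX ω) * (μ0X ω - μhat (X ω)) / (1 - πhat (X ω)) ∂P := by
  have hm : mX ≤ _ := hmX.le.trans hX.comap_le
  have hXmX : Measurable[mX] X := by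
    rw [hmX]; exact fun s hs => ⟨s, hs, rfl⟩
  -- strongly measurable (w.r.t. mX) functions
  have smπ : StronglyMeasurable[mX] (fun ω => πhat (X ω)) :=
    (hπhat.comp hXmX).stronglyMeasurable
  have smf : StronglyMeasurable[mX] (fun ω => (1 - πhat (X ω))⁻¹) :=
    ((measurable_const.sub (hπhat.comp hXmX)).inv).stronglyMeasurable
  have smμ : StronglyMeasurable[mX] (fun ω => μhat (X ω)) :=
    (hμhat.comp hXmX).stronglyMeasurable
  -- basic bounds
  have hRabs : ∀ ω, |1 - R ω| ≤ 1 := by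
    intro ω; rcases hR01 ω with h | h <;> simp [h]
  -- simple integrabilities
  have hR_int : Integrable R P := by
    refine (integrable_const (1 : ℝ)).mono' hR.aestronglyMeasurable ?_
    refine Filter.Eventually.of_forall fun ω => ?_
    rcases hR01 ω with h | h <;> simp [h]
  have h1R_int : Integrable (fun ω => 1 - R ω) P := (integrable_const 1).sub hR_int
  have h1RS_int : Integrable (fun ω => (1 - R ω) * S ω) P := by
    refine hSint.bdd_mul (c := 1) ((measurable_const.sub hR).aestronglyMeasurable) ?_
    exact Filter.Eventually.of_forall fun ω => by
      simpa [Real.norm_eq_abs] using hRabs ω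
  have hB_int : Integrable (fun ω => (1 - πhat (X ω))⁻¹ * ((1 - R ω) * S ω)) P := by
    refine h1RS_int.bdd_mul (c := ε'⁻¹)
      (((measurable_const.sub (hπhat.comp hX)).inv).aestronglyMeasurable) ?_
    filter_upwards [hpos'] with ω hω
    rw [Real.norm_eq_abs, abs_inv]
    rw [abs_of_pos (lt_of_lt_of_le hε' hω)]
    rw [inv_le_inv₀ (lt_of_lt_of_le hε' hω) hε']
    exact hω
  have hh_int : Integrable (fun ω => (1 - πhat (X ω))⁻¹ * (1 - R ω)) P := by
    refine h1R_int.bdd_mul (c := ε'⁻¹)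
      (((measurable_const.sub (hπhat.comp hX)).inv).aestronglyMeasurable) ?_
    filter_upwards [hpos'] with ω hω
    rw [Real.norm_eq_abs, abs_inv]
    rw [abs_of_pos (lt_of_lt_of_le hε' hω)]
    rw [inv_le_inv₀ (lt_of_lt_of_le hε' hω) hε']
    exact hω
  have hhc_int : Integrable (fun ω => 1 - (1 - πhat (X ω))⁻¹ * (1 - R ω)) P :=
    (integrable_const 1).sub hh_int
  have hA_int : Integrable
      (fun ω => μhat (X ω) * (1 - (1 - πhat (X ω))⁻¹ * (1 - R ω))) P := by
    refine (hint1.sub hB_int).congr (Filter.Eventually.of_forall fun ω => ?_)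
    simp only [Pi.sub_apply, div_eq_mul_inv]; ring
  -- conditional expectation computations
  have hce_1R : (P[fun ω => 1 - R ω|mX]) =ᵐ[P] fun ω => 1 - πX ω := by
    have h1 : (fun ω : Ω => 1 - R ω) = (fun _ => (1:ℝ)) - R := rfl
    rw [h1, hπX]
    refine (condExp_sub (integrable_const 1) hR_int mX).trans ?_
    rw [condExp_const (μ := P) hm (1 : ℝ)]
    exact Filter.EventuallyEq.of_eq rfl
  have hce_B : (P[fun ω => (1 - πhat (X ω))⁻¹ * ((1 - R ω) * S ω)|mX]) =ᵐ[P]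
      fun ω => (1 - πhat (X ω))⁻¹ * (P[fun ω' => (1 - R ω') * S ω'|mX]) ω := by
    exact condExp_mul_of_stronglyMeasurable_left smf (by simpa [Pi.mul_def] using hB_int) h1RS_int
  have hce_h : (P[fun ω => (1 - πhat (X ω))⁻¹ * (1 - R ω)|mX]) =ᵐ[P]
      fun ω => (1 - πhat (X ω))⁻¹ * (P[fun ω' => 1 - R ω'|mX]) ω := by
    exact condExp_mul_of_stronglyMeasurable_left smf (by simpa [Pi.mul_def] using hh_int) h1R_int
  have hce_hc : (P[fun ω => 1 - (1 - πhat (X ω))⁻¹ * (1 - R ω)|mX]) =ᵐ[P]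
      fun ω => 1 - (1 - πhat (X ω))⁻¹ * (1 - πX ω) := by
    have h1 : (fun ω : Ω => 1 - (1 - πhat (X ω))⁻¹ * (1 - R ω))
        = (fun _ => (1:ℝ)) - fun ω => (1 - πhat (X ω))⁻¹ * (1 - R ω) := rfl
    rw [h1]
    refine (condExp_sub (integrable_const 1) hh_int mX).trans ?_
    rw [condExp_const (μ := P) hm (1 : ℝ)]
    filter_upwards [hce_h, hce_1R] with ω h2ω h3ω
    simp only [Pi.sub_apply, h2ω, h3ω]
  have hce_A : (P[fun ω => μhat (X ω) * (1 - (1 - πhat (X ω))⁻¹ * (1 - R ω))|mX]) =ᵐ[P]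
      fun ω => μhat (X ω) * (1 - (1 - πhat (X ω))⁻¹ * (1 - πX ω)) := by
    refine (condExp_mul_of_stronglyMeasurable_left smμ (by simpa [Pi.mul_def] using hA_int)
      hhc_int).trans ?_
    filter_upwards [hce_hc] with ω hω
    simp only [Pi.mul_def, hω]
  -- conditional expectation of the DR integrand
  have hce_g : (P[fun ω => (1 - R ω) / (1 - πhat (X ω)) * (S ω - μhat (X ω))
        + μhat (X ω)|mX]) =ᵐ[P]
      fun ω => (1 - πhat (X ω))⁻¹ * (P[fun ω' => (1 - R ω') * S ω'|mX]) ω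
        + μhat (X ω) * (1 - (1 - πhat (X ω))⁻¹ * (1 - πX ω)) := by
    have hsplit : (fun ω => (1 - R ω) / (1 - πhat (X ω)) * (S ω - μhat (X ω))
          + μhat (X ω))
        =ᵐ[P] fun ω => (1 - πhat (X ω))⁻¹ * ((1 - R ω) * S ω)
          + μhat (X ω) * (1 - (1 - πhat (X ω))⁻¹ * (1 - R ω)) := by
      refine Filter.Eventually.of_forall fun ω => ?_
      simp only [div_eq_mul_inv]; ring
    refine (condExp_congr_ae hsplit).trans ?_
    refine (condExp_add hB_int hA_int mX).trans ?_
    filter_upwards [hce_B, hce_A] with ω h1ω h2ω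
    simp only [Pi.add_apply, h1ω, h2ω]
  -- identify the conditional expectation with E[S|mX] + remainder, a.e.
  have hkey : (P[fun ω => (1 - R ω) / (1 - πhat (X ω)) * (S ω - μhat (X ω))
        + μhat (X ω)|mX]) =ᵐ[P]
      fun ω => (P[S|mX]) ω
        + (πhat (X ω) - πX ω) * (μ0X ω - μhat (X ω)) / (1 - πhat (X ω)) := by
    have hpos2 : ∀ᵐ ω ∂P, πX ω ≤ 1 - ε := by rw [hπX]; exact hpos
    filter_upwards [hce_g, hMAR, hce_1R, hpos2, hpos'] with ω h1 h2 h3 h4 h5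
    have hπne : (1 - πX ω) ≠ 0 := by nlinarith
    have hπhatne : (1 - πhat (X ω)) ≠ 0 := by nlinarith
    have h2' : (P[fun ω' => (1 - R ω') * S ω'|mX]) ω = (1 - πX ω) * (P[S|mX]) ω := by
      rw [h2, h3]
    have hμ0' : μ0X ω = (P[S|mX]) ω := by
      have h0 : μ0X ω = (1 - πX ω) * (P[S|mX]) ω / (1 - πX ω) := by
        simp only [hμ0X]; rw [h2']
      rw [h0, mul_div_cancel_left₀ _ hπne]
    rw [h1, h2', hμ0']
    field_simp
    ring
  -- put everything together
  have hLHS : ∫ ω, ((1 - R ω) / (1 - πhat (X ω)) * (S ω - μhat (X ω)) + μhat (X ω)) ∂P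
      = ψ + ∫ ω, (πhat (X ω) - πX ω) * (μ0X ω - μhat (X ω)) / (1 - πhat (X ω)) ∂P := by
    rw [← integral_condExp (μ := P) hm (f := fun ω => (1 - R ω) / (1 - πhat (X ω))
      * (S ω - μhat (X ω)) + μhat (X ω))]
    rw [integral_congr_ae hkey]
    rw [integral_add integrable_condExp hint2]
    rw [integral_condExp (μ := P) hm, hψ]
  rw [hLHS]; ring
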